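/- arXiv:0705.2480 — 2 statements merged into one kernel-verified Lean document; each statement's English description precedes it below -/
import Mathlib

section
/- For the hypercube Q_d with d ≥ 2, the effective resistance between two vertices at Hamming distance 2 equals (2^{d−1} − 1)/((d−1)·2^{d−2}). -/
open Matrix

/-- The hypercube graph `Q_d`: vertices are binary strings of length `d`, with an edge
between strings differing in exactly one bit. -/
def hypercubeGraph (d : ℕ) : SimpleGraph (Fin d → ZMod 2) where
  Adj x y := hammingDist x y = 1
  symm := ⟨fun (x y : Fin d → ZMod 2) (h : hammingDist x y = 1) => show hammingDist y x = 1 by rwa [hammingDist_comm]⟩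
  loopless := ⟨fun x (h : hammingDist x x = 1) => by simp [hammingDist_self] at h⟩

instance (d : ℕ) : DecidableRel (hypercubeGraph d).Adj := fun x y => Nat.decEq (hammingDist x y) 1

/-- The four Moore–Penrose pseudoinverse conditions for real matrices. -/
def IsMoorePenrose {V : Type*} [Fintype V] [DecidableEq V] (L Lp : Matrix V V ℝ) : Prop :=
  L * Lp * L = L ∧ Lp * L * Lp = Lp ∧ (L * Lp)ᵀ = L * Lp ∧ (Lp * L)ᵀ = Lp * L

/-- Effective resistance between two nodes, from the pseudoinverse of the Laplacian. -/
def effRes {V : Type*} (Lp : Matrix V V ℝ) (α β : V) : ℝ :=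
  Lp α α + Lp β β - 2 * Lp α β


lemma mp_unique {V : Type*} [Fintype V] [DecidableEq V] {M A B : Matrix V V ℝ}
    (hA1 : M*A*M = M) (hA2 : A*M*A = A) (hA3 : (M*A)ᵀ = M*A) (hA4 : (A*M)ᵀ = A*M)
    (hB1 : M*B*M = M) (hB2 : B*M*B = B) (hB3 : (M*B)ᵀ = M*B) (hB4 : (B*M)ᵀ = B*M) :
    A = B := by
  have s1 : M * A = M * B := by
    calc M*A = (M*A)ᵀ := hA3.symm
    _ = Aᵀ * (M*B*M)ᵀ := by rw [Matrix.transpose_mul, hB1]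
    _ = (M*A)ᵀ * (M*B)ᵀ := by simp [Matrix.transpose_mul, Matrix.mul_assoc]
    _ = (M*A)*(M*B) := by rw [hA3, hB3]
    _ = (M*A*M)*B := by simp [Matrix.mul_assoc]
    _ = M*B := by rw [hA1]
  have s2 : A * M = B * M := by
    calc A*M = (A*M)ᵀ := hA4.symm
    _ = (M*B*M)ᵀ * Aᵀ := by rw [Matrix.transpose_mul, hB1]
    _ = (B*M)ᵀ * (A*M)ᵀ := by simp [Matrix.transpose_mul, Matrix.mul_assoc]
    _ = (B*M)*(A*M) := by rw [hA4, hB4]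
    _ = B*(M*A*M) := by simp [Matrix.mul_assoc]
    _ = B*M := by rw [hA1]
  calc A = A*M*A := hA2.symm
  _ = B*M*A := by rw [s2]
  _ = B*(M*A) := by rw [Matrix.mul_assoc]
  _ = B*(M*B) := by rw [s1]
  _ = B*M*B := by rw [Matrix.mul_assoc]
  _ = B := hB2

lemma mp_symm {V : Type*} [Fintype V] [DecidableEq V] {L Lp : Matrix V V ℝ}
    (hL : Lᵀ = L) (h : IsMoorePenrose L Lp) : Lpᵀ = Lp := by
  obtain ⟨h1, h2, h3, h4⟩ := h
  refine (mp_unique (M := L) (A := Lp) (B := Lpᵀ) h1 h2 h3 h4 ?_ ?_ ?_ ?_).symm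
  · have := congrArg Matrix.transpose h1
    simp only [Matrix.transpose_mul, hL] at this
    rw [← Matrix.mul_assoc] at this
    rw [this]
  · have := congrArg Matrix.transpose h2
    simp only [Matrix.transpose_mul, hL] at this
    rw [← Matrix.mul_assoc] at this
    rw [this]
  · have e1 : L * Lpᵀ = Lp * L := by
      calc L * Lpᵀ = (Lp * Lᵀ)ᵀ := by simp [Matrix.transpose_mul, hL]
      _ = (Lp * L)ᵀ := by rw [hL]
      _ = Lp * L := h4
    rw [e1]; exact h4
  · have e2 : Lpᵀ * L = L * Lp := by
      calc Lpᵀ * L = (Lᵀ * Lp)ᵀ := by simp [Matrix.transpose_mul, hL]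
      _ = (L * Lp)ᵀ := by rw [hL]
      _ = L * Lp := h3
    rw [e2]; exact h3

lemma effRes_eq {V : Type*} [Fintype V] [DecidableEq V] {L Lp : Matrix V V ℝ}
    (hL : Lᵀ = L) (h : IsMoorePenrose L Lp) (f : V → ℝ) (α β : V)
    (hf : L *ᵥ f = fun x => (if x = α then (1:ℝ) else 0) - (if x = β then 1 else 0)) :
    effRes Lp α β = f α - f β := by
  obtain ⟨h1, h2, h3, h4⟩ := h
  have hsym : Lpᵀ = Lp := mp_symm hL ⟨h1, h2, h3, h4⟩
  have hba : Lp β α = Lp α β := by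
    have := congrFun (congrFun hsym α) β
    simpa [Matrix.transpose_apply] using this
  set b : V → ℝ := fun x => (if x = α then (1:ℝ) else 0) - (if x = β then 1 else 0) with hb
  have key : b ⬝ᵥ (Lp *ᵥ b) = f ⬝ᵥ b := by
    conv_lhs => rw [← hf]
    calc (L *ᵥ f) ⬝ᵥ (Lp *ᵥ (L *ᵥ f))
        = (f ᵥ* Lᵀ) ⬝ᵥ ((Lp * L) *ᵥ f) := by rw [Matrix.vecMul_transpose, Matrix.mulVec_mulVec]
    _ = (f ᵥ* L) ⬝ᵥ ((Lp * L) *ᵥ f) := by rw [hL]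
    _ = f ⬝ᵥ (L *ᵥ ((Lp * L) *ᵥ f)) := (Matrix.dotProduct_mulVec f L _).symm
    _ = f ⬝ᵥ ((L * Lp * L) *ᵥ f) := by rw [Matrix.mulVec_mulVec, Matrix.mul_assoc]
    _ = f ⬝ᵥ (L *ᵥ f) := by rw [h1]
    _ = f ⬝ᵥ b := by rw [hf]
  have e1 : ∀ v : V → ℝ, v ⬝ᵥ b = v α - v β := by
    intro v
    simp [hb, dotProduct, mul_sub, mul_ite, Finset.sum_sub_distrib]
  have e2 : Lp *ᵥ b = fun x => Lp x α - Lp x β := by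
    funext x
    have : (Lp *ᵥ b) x = (fun y => Lp x y) ⬝ᵥ b := rfl
    rw [this, e1]
  have e3 : b ⬝ᵥ (Lp *ᵥ b) = (b ⬝ᵥ (fun x => Lp x α)) - (b ⬝ᵥ (fun x => Lp x β)) := by
    rw [e2]
    simp [dotProduct, mul_sub, Finset.sum_sub_distrib]
  have e4 : ∀ v : V → ℝ, b ⬝ᵥ v = v α - v β := by
    intro v
    simp [hb, dotProduct, sub_mul, ite_mul, Finset.sum_sub_distrib]
  rw [e3, e4, e4, e1] at key
  unfold effRes
  linarith [key]

noncomputable def hS (d m : ℕ) : ℝ :=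
  ((2:ℝ)^d - ∑ l ∈ Finset.range (m+1), (d.choose l : ℝ)) / (2^d * (d.choose m : ℝ) * ((d - m : ℕ) : ℝ))

noncomputable def hA (d m : ℕ) : ℝ := -∑ k ∈ Finset.range m, hS d k

lemma sum_choose_real (d : ℕ) : ∑ l ∈ Finset.range (d+1), ((d.choose l : ℕ) : ℝ) = 2^d := by
  norm_cast
  simpa using Nat.sum_range_choose d

lemma hS_rec (d k : ℕ) (h2 : k + 1 ≤ d) :
    ((d:ℝ) - (k+1)) * hS d (k+1) = (k+1) * hS d k - 1/2^d := by
  have hT : (2:ℝ)^d ≠ 0 := by positivity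
  have hc1 : ((d.choose k : ℕ) : ℝ) ≠ 0 := by
    exact_mod_cast (Nat.choose_pos (by omega)).ne'
  have hc2 : ((d.choose (k+1) : ℕ) : ℝ) ≠ 0 := by
    exact_mod_cast (Nat.choose_pos h2).ne'
  have hdk : ((d - k : ℕ) : ℝ) = (d:ℝ) - k := by
    push_cast [Nat.cast_sub (by omega : k ≤ d)]; ring
  have hdk1 : ((d - (k+1) : ℕ) : ℝ) = (d:ℝ) - (k+1) := by
    push_cast [Nat.cast_sub h2]; ring
  have hc : ((d.choose (k+1) : ℕ) : ℝ) * (k+1) = (d.choose k : ℝ) * ((d:ℝ) - k) := by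
    have := congrArg (Nat.cast : ℕ → ℝ) (Nat.choose_succ_right_eq d k)
    push_cast [Nat.cast_sub (by omega : k ≤ d)] at this
    linarith [this]
  have hsum : ∑ l ∈ Finset.range (k+1+1), ((d.choose l : ℕ) : ℝ)
      = (∑ l ∈ Finset.range (k+1), ((d.choose l : ℕ) : ℝ)) + (d.choose (k+1) : ℝ) :=
    Finset.sum_range_succ _ _
  by_cases hcase : k + 1 = d
  · subst hcase
    have hck : ((k+1).choose k : ℕ) = k + 1 := Nat.choose_succ_self_right k
    have hP : ∑ l ∈ Finset.range (k+1), (((k+1).choose l : ℕ) : ℝ) = 2^(k+1) - 1 := by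
      have := sum_choose_real (k+1)
      rw [hsum] at this
      simp only [Nat.choose_self, Nat.cast_one] at this
      linarith
    have hval : hS (k+1) k = 1 / (2^(k+1) * (k+1)) := by
      unfold hS
      rw [hP, hck]
      norm_num
    rw [hval]
    have hk1 : ((k:ℝ)+1) ≠ 0 := by positivity
    field_simp
    push_cast; ring
  · have hlt : (k+1 : ℝ) < d := by exact_mod_cast lt_of_le_of_ne h2 hcase
    have hdk1' : ((d:ℝ) - (k+1)) ≠ 0 := by linarith
    have hdk' : ((d:ℝ) - k) ≠ 0 := by linarith
    have hk1 : ((k:ℝ)+1) ≠ 0 := by positivity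
    set T := (2:ℝ)^d
    set P := ∑ l ∈ Finset.range (k+1), ((d.choose l : ℕ) : ℝ) with hPdef
    set c1 := ((d.choose k : ℕ) : ℝ)
    set c2 := ((d.choose (k+1) : ℕ) : ℝ)
    have e0 : hS d k = (T - P) / (T * (c2 * (k+1))) := by
      unfold hS
      rw [hdk]
      rw [show T * c1 * ((d:ℝ) - k) = T * (c1 * ((d:ℝ)-k)) from by ring, ← hc]
    have e1 : hS d (k+1) = (T - (P + c2)) / (T * c2 * ((d:ℝ) - (k+1))) := by
      unfold hS
      rw [hsum, hdk1]
    rw [e0, e1]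
    field_simp
    ring

lemma hA_eq (d m : ℕ) (hd : 1 ≤ d) (hm : m ≤ d) :
    (d:ℝ) * hA d m - (((d - m : ℕ):ℝ) * hA d (m+1) + (m:ℝ) * hA d (m-1))
      = (if m = 0 then 1 else 0) - 1/2^d := by
  rcases Nat.eq_zero_or_pos m with hm0 | hm1
  · subst hm0
    have h1 : hA d 0 = 0 := by simp [hA]
    have h2 : hA d 1 = -hS d 0 := by simp [hA]
    have h3 : hS d 0 = ((2:ℝ)^d - 1) / (2^d * d) := by
      unfold hS
      simp
    rw [h1, h2, h3]
    have hT : (2:ℝ)^d ≠ 0 := by positivity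
    have hd' : (d:ℝ) ≠ 0 := by
      have : 0 < d := hd
      exact_mod_cast this.ne'
    simp only [Nat.sub_zero, Nat.cast_zero, if_pos rfl]
    field_simp
    simp
  · obtain ⟨k, rfl⟩ : ∃ k, m = k + 1 := ⟨m - 1, by omega⟩
    have h1 : hA d (k+1+1) = hA d (k+1) - hS d (k+1) := by
      simp [hA, Finset.sum_range_succ]; ring
    have h2 : hA d (k+1) = hA d k - hS d k := by
      simp [hA, Finset.sum_range_succ]; ring
    have hdk1 : ((d - (k+1) : ℕ) : ℝ) = (d:ℝ) - (k+1) := by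
      push_cast [Nat.cast_sub hm]; ring
    have hrec := hS_rec d k hm
    rw [if_neg (by omega : ¬ k + 1 = 0), hdk1, h1]
    have h3 : hA d (k+1-1) = hA d (k+1) + hS d k := by
      simp only [Nat.add_sub_cancel]
      rw [h2]; ring
    rw [h3]
    push_cast
    nlinarith [hrec]

variable {d : ℕ}

lemma zmod2_ne_iff' : ∀ a b : ZMod 2, a ≠ b → a = b + 1 := by decide

lemma zmod2_ne_iff {a b : ZMod 2} (h : a ≠ b) : a = b + 1 := zmod2_ne_iff' a b h

lemma zmod2_self_add_one' : ∀ a : ZMod 2, a ≠ a + 1 := by decide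

lemma zmod2_self_add_one {a : ZMod 2} : a ≠ a + 1 := zmod2_self_add_one' a

variable {d : ℕ}

lemma hammingDist_eq_card (α x : Fin d → ZMod 2) :
    hammingDist α x = (Finset.univ.filter (fun j => α j ≠ x j)).card := rfl

lemma dist_flip_of_eq {α x : Fin d → ZMod 2} {i : Fin d} (h : α i = x i) :
    hammingDist α (Function.update x i (x i + 1)) = hammingDist α x + 1 := by
  rw [hammingDist_eq_card, hammingDist_eq_card]
  have hset : (Finset.univ.filter (fun j => α j ≠ Function.update x i (x i + 1) j))
      = insert i (Finset.univ.filter (fun j => α j ≠ x j)) := by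
    ext j
    rcases eq_or_ne j i with rfl | hj
    · simp [Function.update_self, h, zmod2_self_add_one]
    · simp [Function.update_of_ne hj, hj]
  rw [hset, Finset.card_insert_of_notMem (by simp [h])]

lemma dist_flip_of_ne {α x : Fin d → ZMod 2} {i : Fin d} (h : α i ≠ x i) :
    hammingDist α (Function.update x i (x i + 1)) + 1 = hammingDist α x := by
  rw [hammingDist_eq_card, hammingDist_eq_card]
  have hset : (Finset.univ.filter (fun j => α j ≠ Function.update x i (x i + 1) j))
      = (Finset.univ.filter (fun j => α j ≠ x j)).erase i := by
    ext j
    rcases eq_or_ne j i with rfl | hj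
    · have h2 : α j = x j + 1 := zmod2_ne_iff h
      simp [Function.update_self, h2]
    · simp [Function.update_of_ne hj, hj]
  rw [hset, Finset.card_erase_of_mem (by simp [h])]
  have : 0 < (Finset.univ.filter (fun j => α j ≠ x j)).card :=
    Finset.card_pos.mpr ⟨i, by simp [h]⟩
  omega

lemma flip_inj (x : Fin d → ZMod 2) {i j : Fin d}
    (h : Function.update x i (x i + 1) = Function.update x j (x j + 1)) : i = j := by
  by_contra hij
  have := congrFun h i
  rw [Function.update_self, Function.update_of_ne hij] at this
  exact zmod2_self_add_one this.symm

lemma neighborFinset_eq (x : Fin d → ZMod 2) :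
    (hypercubeGraph d).neighborFinset x
      = Finset.image (fun i => Function.update x i (x i + 1)) Finset.univ := by
  ext y
  rw [SimpleGraph.mem_neighborFinset, Finset.mem_image]
  constructor
  · intro hadj
    have h1 : (Finset.univ.filter (fun j => x j ≠ y j)).card = 1 := hadj
    obtain ⟨i, hi⟩ := Finset.card_eq_one.mp h1
    refine ⟨i, Finset.mem_univ i, ?_⟩
    funext j
    rcases eq_or_ne j i with rfl | hj
    · have : j ∈ Finset.univ.filter (fun j => x j ≠ y j) := hi ▸ Finset.mem_singleton_self j
      have hxy : x j ≠ y j := by simpa using this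
      rw [Function.update_self]
      exact (zmod2_ne_iff (Ne.symm hxy)).symm
    · have : j ∉ Finset.univ.filter (fun j => x j ≠ y j) := by
        rw [hi]; simpa using hj
      have hxy : x j = y j := by simpa using this
      rw [Function.update_of_ne hj, hxy]
  · rintro ⟨i, -, rfl⟩
    show hammingDist x (Function.update x i (x i + 1)) = 1
    rw [dist_flip_of_eq rfl, hammingDist_self]

lemma degree_eq (x : Fin d → ZMod 2) : (hypercubeGraph d).degree x = d := by
  rw [SimpleGraph.degree, neighborFinset_eq, Finset.card_image_of_injective _ ?_, Finset.card_univ,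
    Fintype.card_fin]
  intro i j h
  exact flip_inj x h

lemma neighbor_sum (g : (Fin d → ZMod 2) → ℝ) (x : Fin d → ZMod 2) :
    ∑ u ∈ (hypercubeGraph d).neighborFinset x, g u
      = ∑ i : Fin d, g (Function.update x i (x i + 1)) := by
  rw [neighborFinset_eq, Finset.sum_image]
  intro i _ j _ h
  exact flip_inj x h

lemma neighbor_sum_split (a : ℕ → ℝ) (α x : Fin d → ZMod 2) {m : ℕ}
    (hmx : hammingDist α x = m) :
    ∑ i : Fin d, a (hammingDist α (Function.update x i (x i + 1)))
      = ((d - m : ℕ) : ℝ) * a (m + 1) + (m : ℝ) * a (m - 1) := by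
  rw [← Finset.sum_filter_add_sum_filter_not Finset.univ (fun i => α i = x i)]
  have hcard_ne : (Finset.univ.filter (fun i => ¬ α i = x i)).card = m := by
    rw [← hmx, hammingDist_eq_card]
  have hcard_eq : (Finset.univ.filter (fun i => α i = x i)).card = d - m := by
    have h := Finset.card_filter_add_card_filter_not
      (s := (Finset.univ : Finset (Fin d))) (p := fun i => α i = x i)
    rw [Finset.card_univ, Fintype.card_fin] at h
    omega
  have e1 : ∑ i ∈ Finset.univ.filter (fun i => α i = x i),
      a (hammingDist α (Function.update x i (x i + 1)))
      = ((d - m : ℕ) : ℝ) * a (m + 1) := by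
    have hc : ∀ i ∈ Finset.univ.filter (fun i => α i = x i),
        a (hammingDist α (Function.update x i (x i + 1))) = a (m + 1) := by
      intro i hi
      rw [dist_flip_of_eq (Finset.mem_filter.mp hi).2, hmx]
    rw [Finset.sum_congr rfl hc, Finset.sum_const, hcard_eq, nsmul_eq_mul]
  have e2 : ∑ i ∈ Finset.univ.filter (fun i => ¬ α i = x i),
      a (hammingDist α (Function.update x i (x i + 1)))
      = (m : ℝ) * a (m - 1) := by
    have hc : ∀ i ∈ Finset.univ.filter (fun i => ¬ α i = x i),
        a (hammingDist α (Function.update x i (x i + 1))) = a (m - 1) := by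
      intro i hi
      have h := dist_flip_of_ne (Finset.mem_filter.mp hi).2
      rw [hmx] at h
      congr 1
      omega
    rw [Finset.sum_congr rfl hc, Finset.sum_const, hcard_ne, nsmul_eq_mul]
  rw [e1, e2]

lemma lap_pot {d : ℕ} (hd : 1 ≤ d) (α x : Fin d → ZMod 2) :
    (((hypercubeGraph d).lapMatrix ℝ) *ᵥ fun y => hA d (hammingDist α y)) x
      = (if x = α then 1 else 0) - 1/2^d := by
  rw [SimpleGraph.lapMatrix_mulVec_apply, degree_eq, neighbor_sum (fun y => hA d (hammingDist α y)),
    neighbor_sum_split (hA d) α x rfl]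
  have hmd : hammingDist α x ≤ d := by
    have := hammingDist_le_card_fintype (x := α) (y := x)
    simpa using this
  have h := hA_eq d (hammingDist α x) hd hmd
  rw [h]
  congr 1
  by_cases hx : x = α
  · subst hx
    rw [if_pos rfl, if_pos (hammingDist_self x)]
  · rw [if_neg hx, if_neg (fun h0 => hx (hammingDist_eq_zero.mp h0).symm)]

/-- For the hypercube `Q_d` (`d ≥ 2`) with unit resistors, the effective resistance between
vertices at Hamming distance `2` equals `(2^{d-1} - 1)/((d-1) 2^{d-2})`. -/
theorem hypercube_distance_two_resistance (d : ℕ) (hd : 2 ≤ d)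
    (Lp : Matrix (Fin d → ZMod 2) (Fin d → ZMod 2) ℝ)
    (hLp : IsMoorePenrose ((hypercubeGraph d).lapMatrix ℝ) Lp)
    (α β : Fin d → ZMod 2) (h2 : hammingDist α β = 2) :
    effRes Lp α β = ((2 : ℝ) ^ (d - 1) - 1) / ((d - 1) * 2 ^ (d - 2)) := by
  have hd1 : 1 ≤ d := by omega
  have hL : ((hypercubeGraph d).lapMatrix ℝ)ᵀ = (hypercubeGraph d).lapMatrix ℝ :=
    (hypercubeGraph d).isSymm_lapMatrix (R := ℝ)
  set f : (Fin d → ZMod 2) → ℝ :=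
    fun y => hA d (hammingDist α y) - hA d (hammingDist β y) with hfdef
  have hf : (hypercubeGraph d).lapMatrix ℝ *ᵥ f
      = fun x => (if x = α then (1:ℝ) else 0) - (if x = β then 1 else 0) := by
    have hsplit : f = (fun y => hA d (hammingDist α y)) - (fun y => hA d (hammingDist β y)) := rfl
    rw [hsplit, Matrix.mulVec_sub]
    funext x
    simp only [Pi.sub_apply]
    rw [lap_pot hd1 α x, lap_pot hd1 β x]
    ring
  rw [effRes_eq hL hLp f α β hf]
  have dβα : hammingDist β α = 2 := by rw [hammingDist_comm]; exact h2
  have hfα : f α = hA d 0 - hA d 2 := by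
    rw [hfdef]
    simp only [hammingDist_self, dβα]
  have hfβ : f β = hA d 2 - hA d 0 := by
    rw [hfdef]
    simp only [hammingDist_self, h2]
  rw [hfα, hfβ]
  have hA0 : hA d 0 = 0 := by simp [hA]
  have hA2 : hA d 2 = -(hS d 0 + hS d 1) := by
    simp [hA, Finset.sum_range_succ]
  rw [hA0, hA2]
  obtain ⟨e, rfl⟩ : ∃ e, d = e + 2 := ⟨d - 2, by omega⟩
  have v0 : hS (e+2) 0 = (2^(e+2) - 1)/(2^(e+2) * (e+2)) := by
    unfold hS
    simp
  have v1 : hS (e+2) 1 = (2^(e+2) - (1 + ((e:ℝ)+2)))/(2^(e+2) * (e+2) * (e+1)) := by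
    unfold hS
    rw [Finset.sum_range_succ, Finset.sum_range_one]
    norm_num [Nat.choose_one_right]
  rw [v0, v1]
  have he2 : e + 2 - 1 = e + 1 := rfl
  have he1 : e + 2 - 2 = e := rfl
  rw [he2, he1]
  have hT : (2:ℝ)^(e+2) ≠ 0 := by positivity
  have hTe : (2:ℝ)^e ≠ 0 := by positivity
  have h1 : ((e:ℝ)+2) ≠ 0 := by positivity
  have h3 : ((e:ℝ)+1) ≠ 0 := by positivity
  have hcast : ((e:ℝ) + 2) - 1 = (e:ℝ) + 1 := by ring
  push_cast
  rw [hcast]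
  field_simp
  ring
end

section
/- For the Biggs–Smith graph (distance-regular, 102 vertices, intersection array {3,2,2,2,1,1,1;1,1,1,1,1,1,3}), the effective resistance between vertices at distance 7 (antipodal-type, maximal distance) equals 195/153 = 65/51. -/
open Matrix

/-- Distance-regularity with diameter `d` and intersection numbers `b i`, `c i`. -/
def IsDistanceRegular {V : Type*} [Fintype V] (G : SimpleGraph V) (d : ℕ) (b c : ℕ → ℕ) : Prop :=
  G.Connected ∧ (∀ α β : V, G.dist α β ≤ d) ∧
  ∀ i, i ≤ d → ∀ α β : V, G.dist α β = i →
    ({γ : V | G.Adj β γ ∧ G.dist α γ = i + 1}.ncard = b i ∧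
     {γ : V | G.Adj β γ ∧ G.dist α γ = i - 1}.ncard = c i)

/-- Uniqueness of the Moore–Penrose pseudoinverse. -/
lemma moorePenrose_unique {V : Type*} [Fintype V] [DecidableEq V]
    {L P Q : Matrix V V ℝ} (hP : IsMoorePenrose L P) (hQ : IsMoorePenrose L Q) : P = Q := by
  obtain ⟨hP1, hP2, hP3, hP4⟩ := hP
  obtain ⟨hQ1, hQ2, hQ3, hQ4⟩ := hQ
  have hLt : Lᵀ = Lᵀ * (Qᵀ * Lᵀ) := by
    conv_lhs => rw [← hQ1]
    simp [transpose_mul, Matrix.mul_assoc]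
  have hLt2 : Lᵀ = (Lᵀ * Qᵀ) * Lᵀ := by
    conv_lhs => rw [← hQ1]
    simp [transpose_mul, Matrix.mul_assoc]
  have h1 : L * P = L * Q := by
    calc L * P = Pᵀ * Lᵀ := by rw [← transpose_mul, hP3]
    _ = Pᵀ * (Lᵀ * (Qᵀ * Lᵀ)) := by rw [← hLt]
    _ = (Pᵀ * Lᵀ) * (Qᵀ * Lᵀ) := by rw [Matrix.mul_assoc]
    _ = (L * P)ᵀ * (L * Q)ᵀ := by rw [transpose_mul, transpose_mul]
    _ = (L * P) * (L * Q) := by rw [hP3, hQ3]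
    _ = ((L * P) * L) * Q := by rw [← Matrix.mul_assoc]
    _ = L * Q := by rw [hP1]
  have h2 : P * L = Q * L := by
    calc P * L = Lᵀ * Pᵀ := by rw [← transpose_mul, hP4]
    _ = ((Lᵀ * Qᵀ) * Lᵀ) * Pᵀ := by rw [← hLt2]
    _ = (Lᵀ * Qᵀ) * (Lᵀ * Pᵀ) := by rw [Matrix.mul_assoc]
    _ = (Q * L)ᵀ * (P * L)ᵀ := by rw [transpose_mul, transpose_mul]
    _ = (Q * L) * (P * L) := by rw [hQ4, hP4]
    _ = Q * ((L * P) * L) := by simp [Matrix.mul_assoc]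
    _ = Q * L := by rw [hP1]
  calc P = P * L * P := hP2.symm
  _ = P * (L * Q) := by rw [Matrix.mul_assoc, h1]
  _ = P * L * Q := by rw [← Matrix.mul_assoc]
  _ = Q * L * Q := by rw [h2]
  _ = Q := hQ2

/-- In a distance-regular-type graph, the sum of a distance-function over the neighbors
of a vertex is determined by the intersection numbers. -/
lemma sum_neighbors_eq {V : Type*} [Fintype V] [DecidableEq V]
    (G : SimpleGraph V) [DecidableRel G.Adj] (hconn : G.Connected)
    (b c : ℕ → ℕ)
    (hdle : ∀ α β : V, G.dist α β ≤ 7)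
    (hint : ∀ i, i ≤ 7 → ∀ α β : V, G.dist α β = i →
      ({γ : V | G.Adj β γ ∧ G.dist α γ = i + 1}.ncard = b i ∧
       {γ : V | G.Adj β γ ∧ G.dist α γ = i - 1}.ncard = c i))
    (hb0 : b 0 = 3) (hc0 : c 0 = 0)
    (F : ℕ → ℝ) (a γ : V) :
    ∑ δ ∈ G.neighborFinset γ, F (G.dist a δ) =
      (c (G.dist a γ) : ℝ) * F (G.dist a γ - 1)
      + ((3 : ℝ) - (b (G.dist a γ) : ℝ) - (c (G.dist a γ) : ℝ)) * F (G.dist a γ)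
      + (b (G.dist a γ) : ℝ) * F (G.dist a γ + 1) := by
  classical
  obtain ⟨hb, hc⟩ := hint (G.dist a γ) (hdle a γ) a γ rfl
  have hdeg : (G.neighborFinset γ).card = 3 := by
    obtain ⟨hb3, -⟩ := hint 0 (by norm_num) γ γ SimpleGraph.dist_self
    rw [hb0] at hb3
    have hset : {δ : V | G.Adj γ δ ∧ G.dist γ δ = 0 + 1} = ↑(G.neighborFinset γ) := by
      ext δ
      simp only [Set.mem_setOf_eq, Finset.coe_sort_coe, SimpleGraph.mem_neighborFinset,
        Finset.mem_coe, zero_add]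
      exact ⟨fun h => h.1, fun h => ⟨h, SimpleGraph.dist_eq_one_iff_adj.mpr h⟩⟩
    rwa [hset, Set.ncard_coe_finset] at hb3
  rcases Nat.eq_zero_or_pos (G.dist a γ) with h0 | hpos
  · have haγ : a = γ := hconn.dist_eq_zero_iff.mp h0
    have hall : ∀ δ ∈ G.neighborFinset γ, G.dist a δ = 1 := by
      intro δ hδ
      rw [SimpleGraph.mem_neighborFinset] at hδ
      rw [haγ]
      exact SimpleGraph.dist_eq_one_iff_adj.mpr hδ
    rw [Finset.sum_congr rfl (fun δ hδ => by rw [hall δ hδ])]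
    rw [Finset.sum_const, hdeg, h0, hb0, hc0]
    push_cast
    ring
  · set T : ℕ → Finset V := fun k => (G.neighborFinset γ).filter (fun δ => G.dist a δ = k)
      with hT
    have hTk : ∀ k, ({δ : V | G.Adj γ δ ∧ G.dist a δ = k} : Set V) = ↑(T k) := by
      intro k
      ext δ
      simp [hT, Finset.mem_filter, SimpleGraph.mem_neighborFinset]
    have hbT : (T (G.dist a γ + 1)).card = b (G.dist a γ) := by
      rwa [hTk, Set.ncard_coe_finset] at hb
    have hcT : (T (G.dist a γ - 1)).card = c (G.dist a γ) := by
      rwa [hTk, Set.ncard_coe_finset] at hc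
    have hne : ∀ δ ∈ G.neighborFinset γ, G.dist a δ = G.dist a γ - 1 ∨
        G.dist a δ = G.dist a γ ∨ G.dist a δ = G.dist a γ + 1 := by
      intro δ hδ
      rw [SimpleGraph.mem_neighborFinset] at hδ
      have h1 : G.dist γ δ = 1 := SimpleGraph.dist_eq_one_iff_adj.mpr hδ
      have h2 : G.dist δ γ = 1 := by rwa [SimpleGraph.dist_comm] at h1
      have t1 : G.dist a δ ≤ G.dist a γ + G.dist γ δ := hconn.dist_triangle
      have t2 : G.dist a γ ≤ G.dist a δ + G.dist δ γ := hconn.dist_triangle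
      omega
    have hd1 : Disjoint (T (G.dist a γ - 1)) (T (G.dist a γ)) := by
      rw [Finset.disjoint_left]
      intro δ hδ1 hδ2
      rw [hT] at hδ1 hδ2
      simp only [Finset.mem_filter] at hδ1 hδ2
      omega
    have hd2 : Disjoint (T (G.dist a γ - 1) ∪ T (G.dist a γ)) (T (G.dist a γ + 1)) := by
      rw [Finset.disjoint_left]
      intro δ hδ1 hδ2
      rw [hT] at hδ1 hδ2
      simp only [Finset.mem_union, Finset.mem_filter] at hδ1 hδ2
      omega
    have hunion : G.neighborFinset γ =
        (T (G.dist a γ - 1) ∪ T (G.dist a γ)) ∪ T (G.dist a γ + 1) := by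
      ext δ
      simp only [Finset.mem_union, hT, Finset.mem_filter]
      constructor
      · intro h
        rcases hne δ h with h' | h' | h' <;> tauto
      · tauto
    have hsumT : ∀ k, ∑ δ ∈ T k, F (G.dist a δ) = ((T k).card : ℝ) * F k := by
      intro k
      rw [Finset.sum_congr rfl (fun δ hδ => by rw [(Finset.mem_filter.mp hδ).2]),
        Finset.sum_const, nsmul_eq_mul]
    have hcard3 : (T (G.dist a γ - 1)).card + (T (G.dist a γ)).card
        + (T (G.dist a γ + 1)).card = 3 := by
      rw [← hdeg, hunion, Finset.card_union_of_disjoint hd2, Finset.card_union_of_disjoint hd1]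
    have hmid : ((T (G.dist a γ)).card : ℝ)
        = 3 - (b (G.dist a γ) : ℝ) - (c (G.dist a γ) : ℝ) := by
      rw [← hbT, ← hcT]
      have : ((T (G.dist a γ - 1)).card : ℝ) + ((T (G.dist a γ)).card : ℝ)
          + ((T (G.dist a γ + 1)).card : ℝ) = 3 := by exact_mod_cast hcard3
      linarith
    rw [hunion, Finset.sum_union hd2, Finset.sum_union hd1, hsumT, hsumT, hsumT,
      hbT, hcT, hmid]

/-- For the Biggs–Smith graph (distance-regular on 102 vertices with intersection array
`{3,2,2,2,1,1,1; 1,1,1,1,1,1,3}`), the effective resistance between vertices at the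
maximal distance 7 equals `195/153 = 65/51`. -/
theorem biggsSmith_antipodal_resistance {V : Type*} [Fintype V] [DecidableEq V]
    (G : SimpleGraph V) [DecidableRel G.Adj]
    (hN : Fintype.card V = 102)
    (hdr : IsDistanceRegular G 7 (fun i => [3, 2, 2, 2, 1, 1, 1].getD i 0)
      (fun i => [0, 1, 1, 1, 1, 1, 1, 3].getD i 0))
    (Lp : Matrix V V ℝ) (hLp : IsMoorePenrose (G.lapMatrix ℝ) Lp)
    (α β : V) (hd : G.dist α β = 7) :
    effRes Lp α β = 65 / 51 := by
  classical
  obtain ⟨hconn, hdle, hint⟩ := hdr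
  obtain ⟨hL1, hL2, hL3, hL4⟩ := hLp
  set L : Matrix V V ℝ := G.lapMatrix ℝ with hLdef
  -- the potential function of the distance from a source
  set F : ℕ → ℝ := fun d =>
    (([0, -101, -150, -173, -183, -190, -194, -195] : List ℝ).getD d (-195)) / 306 with hFdef
  have hΦ : ∀ a γ : V, (L *ᵥ (fun δ => F (G.dist a δ))) γ =
      if G.dist a γ = 0 then 101 / 102 else -1 / 102 := by
    intro a γ
    rw [SimpleGraph.lapMatrix_mulVec_apply,
      sum_neighbors_eq G hconn _ _ hdle hint rfl rfl F a γ]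
    have hdegγ : G.degree γ = 3 := by
      obtain ⟨hb3, -⟩ := hint 0 (by norm_num) γ γ SimpleGraph.dist_self
      have hset : {δ : V | G.Adj γ δ ∧ G.dist γ δ = 0 + 1} = ↑(G.neighborFinset γ) := by
        ext δ
        simp only [Set.mem_setOf_eq, Finset.coe_sort_coe, SimpleGraph.mem_neighborFinset,
          Finset.mem_coe, zero_add]
        exact ⟨fun h => h.1, fun h => ⟨h, SimpleGraph.dist_eq_one_iff_adj.mpr h⟩⟩
      rw [hset, Set.ncard_coe_finset] at hb3
      rwa [SimpleGraph.card_neighborFinset_eq_degree] at hb3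
    rw [hdegγ]
    have hd7 : G.dist a γ ≤ 7 := hdle a γ
    set d := G.dist a γ with hdd
    interval_cases d <;> norm_num [hFdef]
  -- the explicit potential vector
  set x : V → ℝ := fun δ => F (G.dist α δ) - F (G.dist β δ) with hxdef
  set w : V → ℝ := fun δ => (if δ = α then (1 : ℝ) else 0) - (if δ = β then 1 else 0)
    with hwdef
  have hLx : L *ᵥ x = w := by
    funext γ
    have : x = (fun δ => F (G.dist α δ)) - (fun δ => F (G.dist β δ)) := rfl
    rw [this, Matrix.mulVec_sub, Pi.sub_apply, hΦ, hΦ, hwdef]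
    by_cases h1 : γ = α
    · subst h1
      have h2 : G.dist β γ = 7 := by rwa [SimpleGraph.dist_comm] at hd
      have h3 : γ ≠ β := by
        intro h; rw [h, SimpleGraph.dist_self] at h2; omega
      simp [SimpleGraph.dist_self, h2, h3]
      norm_num
    · by_cases h2 : γ = β
      · subst h2
        have h3 : G.dist α γ = 7 := hd
        simp [SimpleGraph.dist_self, h3, h1]
        norm_num
      · have h3 : G.dist α γ ≠ 0 := fun h => h1 (hconn.dist_eq_zero_iff.mp h).symm
        have h4 : G.dist β γ ≠ 0 := fun h => h2 (hconn.dist_eq_zero_iff.mp h).symm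
        simp [h1, h2, h3, h4]
  -- Lp is symmetric
  have hLsymm : Lᵀ = L := G.isSymm_lapMatrix (R := ℝ)
  have hLpsymm : Lpᵀ = Lp := by
    refine moorePenrose_unique (L := L) ?_ ⟨hL1, hL2, hL3, hL4⟩
    refine ⟨?_, ?_, ?_, ?_⟩
    · calc L * Lpᵀ * L = Lᵀ * Lpᵀ * Lᵀ := by rw [hLsymm]
      _ = (L * Lp * L)ᵀ := by simp [transpose_mul, Matrix.mul_assoc]
      _ = Lᵀ := by rw [hL1]
      _ = L := hLsymm
    · calc Lpᵀ * L * Lpᵀ = Lpᵀ * Lᵀ * Lpᵀ := by rw [hLsymm]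
      _ = (Lp * L * Lp)ᵀ := by simp [transpose_mul, Matrix.mul_assoc]
      _ = Lpᵀ := by rw [hL2]
    · have e1 : L * Lpᵀ = (Lp * L)ᵀ := by rw [transpose_mul, hLsymm]
      rw [e1, transpose_transpose, hL4]
    · have e2 : Lpᵀ * L = (L * Lp)ᵀ := by rw [transpose_mul, hLsymm]
      rw [e2, transpose_transpose, hL3]
  -- energy computation
  have hkey : w ⬝ᵥ (Lp *ᵥ w) = x ⬝ᵥ w := by
    calc w ⬝ᵥ (Lp *ᵥ w) = (L *ᵥ x) ⬝ᵥ (Lp *ᵥ (L *ᵥ x)) := by rw [hLx]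
    _ = (L *ᵥ x) ⬝ᵥ ((Lp * L) *ᵥ x) := by rw [Matrix.mulVec_mulVec]
    _ = (x ᵥ* Lᵀ) ⬝ᵥ ((Lp * L) *ᵥ x) := by rw [Matrix.vecMul_transpose]
    _ = x ⬝ᵥ (Lᵀ *ᵥ ((Lp * L) *ᵥ x)) := (Matrix.dotProduct_mulVec x Lᵀ _).symm
    _ = x ⬝ᵥ ((L * Lp * L) *ᵥ x) := by rw [hLsymm, Matrix.mulVec_mulVec, ← Matrix.mul_assoc]
    _ = x ⬝ᵥ (L *ᵥ x) := by rw [hL1]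
    _ = x ⬝ᵥ w := by rw [hLx]
  have hαβ : α ≠ β := by intro h; rw [h, SimpleGraph.dist_self] at hd; omega
  have hxw : x ⬝ᵥ w = 65 / 51 := by
    have hxa : x α = -F 7 := by
      have : G.dist β α = 7 := by rwa [SimpleGraph.dist_comm] at hd
      simp [hxdef, SimpleGraph.dist_self, this, hFdef]
    have hxb : x β = F 7 := by
      simp [hxdef, SimpleGraph.dist_self, hd, hFdef]
    have : x ⬝ᵥ w = x α - x β := by
      simp [dotProduct, hwdef, mul_sub, mul_ite, Finset.sum_sub_distrib,
        Finset.sum_ite_eq', hαβ]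
    rw [this, hxa, hxb, hFdef]
    norm_num
  have hw : w ⬝ᵥ (Lp *ᵥ w) = Lp α α + Lp β β - Lp α β - Lp β α := by
    simp [dotProduct, Matrix.mulVec, hwdef, sub_mul, mul_sub, ite_mul, mul_ite,
      Finset.sum_sub_distrib, Finset.sum_ite_eq', hαβ, Ne.symm hαβ]
    ring
  have hsym : Lp β α = Lp α β := (congrFun (congrFun hLpsymm β) α).symm
  rw [effRes]
  rw [hw, hsym, hxw] at hkey
  linarith
end
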